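/- Let e = {h_1, h_2} be a separating edge of Γ, splitting Γ into Γ_1 and Γ_2 as in the context, with leg-value subsequences A_1, A_2 of sums s_1, s_2. Let Q = x_{h_1}^{c_1} x_{h_2}^{c_2} Q_1 Q_2 be a monomial, where Q_1 (resp. Q_2) involves only the variables x_h for non-leg half-edges h lying in Γ_1 (resp. Γ_2). Assume the sums S^Γ_{A,r}(Q), S^{Γ_1}_{(A_1,−s_1),r}(Q_1) and S^{Γ_2}_{(A_2,−s_2),r}(Q_2) are all eventually polynomial in r, so their constant terms are defined. Then S^Γ_{A,0}(Q) = S^{Γ_1}_{(A_1,−s_1),0}(Q_1) · (−s_1)^{c_1} (−s_2)^{c_2} · S^{Γ_2}_{(A_2,−s_2),0}(Q_2). -/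

import Mathlib

open scoped BigOperators

/-- A graph of genus `g` with `n` legs: vertices, half-edges, an involution,
a root map, a list of `n` legs which are exactly the fixed points of the
involution, and a genus function. -/
structure LegGraph (n : ℕ) where
  V : Type
  H : Type
  [fintypeV : Fintype V]
  [fintypeH : Fintype H]
  [decEqV : DecidableEq V]
  [decEqH : DecidableEq H]
  ι : H → H
  ι_invol : ∀ h, ι (ι h) = h
  root : H → V
  leg : Fin n → H
  leg_inj : Function.Injective leg
  leg_iff : ∀ h, ι h = h ↔ ∃ i, leg i = h
  genus : V → ℕ

attribute [instance] LegGraph.fintypeV LegGraph.fintypeH LegGraph.decEqV LegGraph.decEqH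

namespace LegGraph

variable {n : ℕ}

/-- Connectedness: the equivalence relation on `V` generated by relating `r h` and
`r (i h)` has exactly one class. -/
def Connected (G : LegGraph n) : Prop :=
  ∀ v w : G.V, Relation.EqvGen (fun a b => ∃ h : G.H, G.root h = a ∧ G.root (G.ι h) = b) v w

/-- The number of edges: pairs `{h, ι h}` with `ι h ≠ h`. -/
def edgeCard (G : LegGraph n) : ℕ :=
  (Finset.univ.filter fun h : G.H => G.ι h ≠ h).card / 2

/-- The first Betti number `#E - #V + 1` (as an integer). -/
def h1 (G : LegGraph n) : ℤ :=
  (G.edgeCard : ℤ) - (Fintype.card G.V : ℤ) + 1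

/-- The number `n(v)` of half-edges rooted at a vertex `v`. -/
def deg (G : LegGraph n) (v : G.V) : ℕ :=
  (Finset.univ.filter fun h : G.H => G.root h = v).card

/-- The (total) genus of the graph: `∑ g(v) + h¹(Γ)`. -/
def genusTot (G : LegGraph n) : ℤ :=
  (∑ v : G.V, (G.genus v : ℤ)) + G.h1

/-- A weighting for `A` mod `r` (with twist `k`). -/
def IsWeighting (G : LegGraph n) (k : ℤ) (A : Fin n → ℤ) (r : ℕ) (w : G.H → Fin r) : Prop :=
  (∀ i : Fin n, ((w (G.leg i) : ℕ) : ℤ) % (r : ℤ) = A i % (r : ℤ)) ∧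
  (∀ h : G.H, G.ι h ≠ h → (((w h : ℕ) : ℤ) + ((w (G.ι h) : ℕ) : ℤ)) % (r : ℤ) = 0) ∧
  (∀ v : G.V,
    (∑ h ∈ Finset.univ.filter (fun h : G.H => G.root h = v), ((w h : ℕ) : ℤ)) % (r : ℤ)
      = (k * (2 * (G.genus v : ℤ) - 2 + (G.deg v : ℤ))) % (r : ℤ))

open scoped Classical in
/-- The finite set `W^Γ_{A,r}` of weightings for `A` mod `r` (with twist `k`). -/
noncomputable def weightings (G : LegGraph n) (k : ℤ) (A : Fin n → ℤ) (r : ℕ) :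
    Finset (G.H → Fin r) :=
  Finset.univ.filter fun w => G.IsWeighting k A r w

/-- The non-leg half-edges, indexing the variables of the polynomials `Q`. -/
def NonLeg (G : LegGraph n) : Type := {h : G.H // G.ι h ≠ h}

/-- The sum `S^Γ_{A,r}(Q) = r^{-h¹(Γ)} ∑_{w ∈ W^Γ_{A,r}} Q((w h)_h)`. -/
noncomputable def S (G : LegGraph n) (k : ℤ) (A : Fin n → ℤ)
    (Q : MvPolynomial G.NonLeg ℤ) (r : ℕ) : ℚ :=
  (r : ℚ) ^ (-G.h1) * ∑ w ∈ G.weightings k A r,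
    ((MvPolynomial.eval (fun h : G.NonLeg => ((w h.1 : ℕ) : ℤ)) Q : ℤ) : ℚ)

end LegGraph

/-- A function `ℕ → ℚ` is eventually polynomial. -/
def EvPoly (f : ℕ → ℚ) : Prop :=
  ∃ p : Polynomial ℚ, ∃ N : ℕ, ∀ r : ℕ, N ≤ r → f r = p.eval (r : ℚ)

open scoped Classical in
/-- The constant term of the polynomial expression of an eventually polynomial function
(junk value `0` otherwise).  When `EvPoly f` holds this is well defined, i.e. independent
of the choice of polynomial. -/
noncomputable def constTerm (f : ℕ → ℚ) : ℚ :=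
  if h : EvPoly f then (Classical.choose h).eval 0 else 0

/-- `S^Γ_{A,0}(Q)`: the constant term of the eventually polynomial function
`r ↦ S^Γ_{A,r}(Q)`. -/
noncomputable def LegGraph.S0 {n : ℕ} (G : LegGraph n) (k : ℤ) (A : Fin n → ℤ)
    (Q : MvPolynomial G.NonLeg ℤ) : ℚ :=
  constTerm fun r => G.S k A Q r

/-- `m mod r` as an element of `Fin r = {0, …, r-1}`, for an integer `m`. -/
def intFin (r : ℕ) (hr : 0 < r) (m : ℤ) : Fin r :=
  ⟨(m % (r : ℤ)).toNat, by
    have h0 : (0 : ℤ) < (r : ℤ) := by exact_mod_cast hr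
    have h1 : m % (r : ℤ) < (r : ℤ) := Int.emod_lt_of_pos m h0
    have h2 : 0 ≤ m % (r : ℤ) := Int.emod_nonneg m (by omega)
    omega⟩
namespace LegGraph

variable {n : ℕ}

theorem not_leg_of_not_fixed (G : LegGraph n) {h : G.H} (hh : G.ι h ≠ h) :
    ∀ i, G.leg i ≠ h :=
  fun i hi => hh ((G.leg_iff h).2 ⟨i, hi⟩)

/-- The graph `Γ_e` obtained by cutting the edge `e = {h₁, h₂}`: the involution now fixes
`h₁` and `h₂`, which become the two new legs `ℓ_{n+1} = h₁` and `ℓ_{n+2} = h₂`. -/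
def cut (G : LegGraph n) (h₁ h₂ : G.H) (he : G.ι h₁ = h₂) (hne : h₁ ≠ h₂) :
    LegGraph (n + 2) where
  V := G.V
  H := G.H
  ι h := if h = h₁ then h₁ else if h = h₂ then h₂ else G.ι h
  ι_invol := by
    have he' : G.ι h₂ = h₁ := by rw [← he, G.ι_invol]
    intro h
    rcases eq_or_ne h h₁ with rfl | e1
    · simp
    · rcases eq_or_ne h h₂ with rfl | e2
      · simp [Ne.symm hne]
      · have hι1 : G.ι h ≠ h₁ := by
          intro hh
          exact e2 (by rw [← G.ι_invol h, hh, he])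
        have hι2 : G.ι h ≠ h₂ := by
          intro hh
          exact e1 (by rw [← G.ι_invol h, hh, he'])
        simp [e1, e2, hι1, hι2, G.ι_invol]
  root := G.root
  leg := Fin.snoc (Fin.snoc G.leg h₁) h₂
  leg_inj := by
    have hb₁ : G.ι h₁ ≠ h₁ := by rw [he]; exact Ne.symm hne
    have he' : G.ι h₂ = h₁ := by rw [← he, G.ι_invol]
    have hb₂ : G.ι h₂ ≠ h₂ := by rw [he']; exact hne
    have hl₁ := G.not_leg_of_not_fixed hb₁
    have hl₂ := G.not_leg_of_not_fixed hb₂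
    intro i j hij
    induction i using Fin.lastCases with
    | last =>
      induction j using Fin.lastCases with
      | last => rfl
      | cast j =>
        rw [Fin.snoc_last, Fin.snoc_castSucc] at hij
        induction j using Fin.lastCases with
        | last => rw [Fin.snoc_last] at hij; exact absurd hij.symm hne
        | cast j => rw [Fin.snoc_castSucc] at hij; exact absurd hij.symm (hl₂ j)
    | cast i =>
      induction j using Fin.lastCases with
      | last =>
        rw [Fin.snoc_last, Fin.snoc_castSucc] at hij
        induction i using Fin.lastCases with
        | last => rw [Fin.snoc_last] at hij; exact absurd hij hne
        | cast i => rw [Fin.snoc_castSucc] at hij; exact absurd hij (hl₂ i)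
      | cast j =>
        rw [Fin.snoc_castSucc, Fin.snoc_castSucc] at hij
        induction i using Fin.lastCases with
        | last =>
          induction j using Fin.lastCases with
          | last => rfl
          | cast j =>
            rw [Fin.snoc_last, Fin.snoc_castSucc] at hij
            exact absurd hij.symm (hl₁ j)
        | cast i =>
          induction j using Fin.lastCases with
          | last =>
            rw [Fin.snoc_last, Fin.snoc_castSucc] at hij
            exact absurd hij (hl₁ i)
          | cast j =>
            rw [Fin.snoc_castSucc, Fin.snoc_castSucc] at hij
            rw [G.leg_inj hij]
  genus := G.genus
  leg_iff := by
    have hb₁ : G.ι h₁ ≠ h₁ := by rw [he]; exact Ne.symm hne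
    have he' : G.ι h₂ = h₁ := by rw [← he, G.ι_invol]
    intro h
    constructor
    · intro hfix
      rcases eq_or_ne h h₁ with rfl | e1
      · exact ⟨(Fin.last n).castSucc, by
          rw [Fin.snoc_castSucc, Fin.snoc_last]⟩
      · rcases eq_or_ne h h₂ with rfl | e2
        · exact ⟨Fin.last (n + 1), by rw [Fin.snoc_last]⟩
        · simp only [if_neg e1, if_neg e2] at hfix
          obtain ⟨i, hi⟩ := (G.leg_iff h).1 hfix
          exact ⟨i.castSucc.castSucc, by rw [Fin.snoc_castSucc, Fin.snoc_castSucc]; exact hi⟩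
    · rintro ⟨i, rfl⟩
      induction i using Fin.lastCases with
      | last =>
        rw [Fin.snoc_last]
        simp [Ne.symm hne]
      | cast i =>
        rw [Fin.snoc_castSucc]
        induction i using Fin.lastCases with
        | last => rw [Fin.snoc_last]; simp
        | cast i =>
          rw [Fin.snoc_castSucc]
          have h1 := G.not_leg_of_not_fixed hb₁ i
          have h2 := G.not_leg_of_not_fixed (show G.ι h₂ ≠ h₂ by rw [he']; exact hne) i
          show (if G.leg i = h₁ then h₁ else if G.leg i = h₂ then h₂ else G.ι (G.leg i))
              = G.leg i
          rw [if_neg h1, if_neg h2]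
          exact (G.leg_iff (G.leg i)).2 ⟨i, rfl⟩

end LegGraph
namespace LegGraph

variable {n : ℕ}

/-- The graph `Γ'` obtained from `Γ` by attaching one new leg at every vertex. -/
noncomputable def addLegs (G : LegGraph n) : LegGraph (n + Fintype.card G.V) where
  V := G.V
  H := G.H ⊕ G.V
  ι := Sum.map G.ι id
  ι_invol := by rintro (h | v) <;> simp [G.ι_invol]
  root := Sum.elim G.root id
  leg i :=
    if hi : (i : ℕ) < n then Sum.inl (G.leg ⟨(i : ℕ), hi⟩)
    else Sum.inr ((Fintype.equivFin G.V).symm ⟨(i : ℕ) - n, by have := i.isLt; omega⟩)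
  leg_inj := by
    intro i j hij
    beta_reduce at hij
    by_cases hi : (i : ℕ) < n <;> by_cases hj : (j : ℕ) < n
    · rw [dif_pos hi, dif_pos hj] at hij
      have h2 := G.leg_inj (Sum.inl_injective hij)
      have h3 : (i : ℕ) = (j : ℕ) := by simpa using congrArg Fin.val h2
      exact Fin.ext h3
    · rw [dif_pos hi, dif_neg hj] at hij
      exact absurd hij (by simp)
    · rw [dif_neg hi, dif_pos hj] at hij
      exact absurd hij (by simp)
    · rw [dif_neg hi, dif_neg hj] at hij
      have h2 := (Fintype.equivFin G.V).symm.injective (Sum.inr_injective hij)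
      have h3 : (i : ℕ) - n = (j : ℕ) - n := by simpa using congrArg Fin.val h2
      exact Fin.ext (by omega)
  leg_iff := by
    rintro (h | v)
    · constructor
      · intro hfix
        have : G.ι h = h := Sum.inl_injective hfix
        obtain ⟨i, hi⟩ := (G.leg_iff h).1 this
        refine ⟨⟨(i : ℕ), by have := i.isLt; omega⟩, ?_⟩
        beta_reduce
        rw [dif_pos i.isLt]
        exact congrArg Sum.inl (by rw [show (⟨(i : ℕ), i.isLt⟩ : Fin n) = i from rfl, hi])
      · rintro ⟨i, hi⟩
        beta_reduce at hi
        by_cases h' : (i : ℕ) < n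
        · rw [dif_pos h'] at hi
          have := Sum.inl_injective hi
          have hfix : G.ι h = h := (G.leg_iff h).2 ⟨⟨(i : ℕ), h'⟩, this⟩
          exact congrArg Sum.inl hfix
        · rw [dif_neg h'] at hi
          exact absurd hi (by simp)
    · constructor
      · intro _
        refine ⟨⟨n + (Fintype.equivFin G.V v : ℕ), by
            have := (Fintype.equivFin G.V v).isLt; omega⟩, ?_⟩
        beta_reduce
        rw [dif_neg (by simp only [Fin.val_mk]; omega)]
        refine congrArg Sum.inr ?_
        rw [Equiv.symm_apply_eq]
        exact Fin.ext (by simp)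
      · intro _
        rfl
  genus := G.genus

end LegGraph
/-- The data exhibiting an edge `e = {h₁, h₂}` of `Γ` as a separating edge splitting `Γ`
into two connected graphs `Γ₁` (containing the root of `h₁`, with one new leg `ℓ'` at the
root of `h₁`, placed last) and `Γ₂` (containing the root of `h₂`, with one new leg `ℓ''`
at the root of `h₂`, placed last). -/
structure EdgeSplit {n n₁ n₂ : ℕ} (G : LegGraph n) (G₁ : LegGraph (n₁ + 1))
    (G₂ : LegGraph (n₂ + 1)) (h₁ h₂ : G.H) where
  he : G.ι h₁ = h₂
  hne : h₁ ≠ h₂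
  conn : G.Connected
  conn₁ : G₁.Connected
  conn₂ : G₂.Connected
  eV : G.V ≃ G₁.V ⊕ G₂.V
  eH : G.H ≃ G₁.H ⊕ G₂.H
  σ : Fin n ≃ Fin n₁ ⊕ Fin n₂
  map_h₁ : eH h₁ = Sum.inl (G₁.leg (Fin.last n₁))
  map_h₂ : eH h₂ = Sum.inr (G₂.leg (Fin.last n₂))
  ι_compat : ∀ h : G.H, h ≠ h₁ → h ≠ h₂ → eH (G.ι h) = Sum.map G₁.ι G₂.ι (eH h)
  root_compat : ∀ h : G.H, eV (G.root h) = Sum.map G₁.root G₂.root (eH h)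
  leg_compat : ∀ i : Fin n, eH (G.leg i) =
    Sum.map (fun j : Fin n₁ => G₁.leg j.castSucc) (fun j : Fin n₂ => G₂.leg j.castSucc) (σ i)
  genus_compat : ∀ v : G.V, G.genus v = Sum.elim G₁.genus G₂.genus (eV v)

/-- The class of graphs obtained from a given graph by repeatedly cutting edges. -/
inductive CutDesc : {m : ℕ} → LegGraph m → {m' : ℕ} → LegGraph m' → Prop
  | refl {m : ℕ} (G : LegGraph m) : CutDesc G G
  | cut {m m' : ℕ} (G : LegGraph m) (G' : LegGraph m') (h₁ h₂ : G'.H)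
      (he : G'.ι h₁ = h₂) (hne : h₁ ≠ h₂) :
      CutDesc G G' → CutDesc G (G'.cut h₁ h₂ he hne)

/-- The class of graphs obtained from a given graph by adding legs and repeatedly
cutting edges. -/
inductive Desc : {m : ℕ} → LegGraph m → {m' : ℕ} → LegGraph m' → Prop
  | refl {m : ℕ} (G : LegGraph m) : Desc G G
  | cut {m m' : ℕ} (G : LegGraph m) (G' : LegGraph m') (h₁ h₂ : G'.H)
      (he : G'.ι h₁ = h₂) (hne : h₁ ≠ h₂) :
      Desc G G' → Desc G (G'.cut h₁ h₂ he hne)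
  | addLegs {m m' : ℕ} (G : LegGraph m) (G' : LegGraph m') :
      Desc G G' → Desc G G'.addLegs

namespace SepProof

open Finset

lemma poly_unique (p q : Polynomial ℚ) (N : ℕ)
    (h : ∀ r : ℕ, N ≤ r → p.eval (r : ℚ) = q.eval (r : ℚ)) : p = q := by
  have hz : p - q = 0 := by
    apply Polynomial.eq_zero_of_infinite_isRoot
    have hinf : ((fun r : ℕ => (r : ℚ)) '' Set.Ici N).Infinite := by
      apply Set.Infinite.image
      · intro a _ b _ hab
        simpa using hab
      · exact Set.Ici_infinite N
    apply hinf.mono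
    rintro x ⟨r, hr, rfl⟩
    simp [Polynomial.IsRoot, h r hr]
  exact sub_eq_zero.mp hz

lemma constTerm_eq (f : ℕ → ℚ) (p : Polynomial ℚ) (N : ℕ)
    (h : ∀ r : ℕ, N ≤ r → f r = p.eval (r : ℚ)) : constTerm f = p.eval 0 := by
  have hev : EvPoly f := ⟨p, N, h⟩
  rw [constTerm, dif_pos hev]
  congr 1
  obtain ⟨N', h'⟩ := Classical.choose_spec hev
  refine poly_unique _ _ (max N N') fun r hr => ?_
  rw [← h' r (le_trans (le_max_right _ _) hr), ← h r (le_trans (le_max_left _ _) hr)]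

lemma zmod_of_emod {r : ℕ} {a b : ℤ} (h : a % (r : ℤ) = b % (r : ℤ)) :
    (a : ZMod r) = (b : ZMod r) :=
  (ZMod.intCast_eq_intCast_iff _ _ _).2 h

lemma emod_of_zmod {r : ℕ} {a b : ℤ} (h : (a : ZMod r) = (b : ZMod r)) :
    a % (r : ℤ) = b % (r : ℤ) :=
  (ZMod.intCast_eq_intCast_iff _ _ _).1 h

lemma mem_weightings_iff {m : ℕ} (G : LegGraph m) (A : Fin m → ℤ) (r : ℕ) (w : G.H → Fin r) :
    w ∈ G.weightings 0 A r ↔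
      ((∀ i, ((w (G.leg i) : ℕ) : ZMod r) = ((A i) : ZMod r)) ∧
       (∀ h, G.ι h ≠ h → ((w h : ℕ) : ZMod r) + ((w (G.ι h) : ℕ) : ZMod r) = 0) ∧
       (∀ v, (∑ h ∈ Finset.univ.filter (fun h => G.root h = v),
          ((w h : ℕ) : ZMod r)) = 0)) := by
  classical
  rw [LegGraph.weightings, Finset.mem_filter]
  simp only [Finset.mem_univ, true_and]
  unfold LegGraph.IsWeighting
  constructor
  · rintro ⟨c1, c2, c3⟩
    refine ⟨fun i => ?_, fun h hh => ?_, fun v => ?_⟩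
    · have := zmod_of_emod (r := r) (c1 i)
      push_cast at this
      exact this
    · have := zmod_of_emod (r := r) ((c2 h hh).trans (Int.zero_emod _).symm)
      push_cast at this
      exact this
    · have h3 := c3 v
      rw [zero_mul, Int.zero_emod] at h3
      have := zmod_of_emod (r := r) (h3.trans (Int.zero_emod _).symm)
      push_cast at this
      exact this
  · rintro ⟨c1, c2, c3⟩
    refine ⟨fun i => ?_, fun h hh => ?_, fun v => ?_⟩
    · refine emod_of_zmod (r := r) ?_
      have := c1 i
      push_cast
      exact this
    · rw [← Int.zero_emod (r : ℤ)]
      refine emod_of_zmod (r := r) ?_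
      have := c2 h hh
      push_cast
      exact this
    · rw [zero_mul, Int.zero_emod, ← Int.zero_emod (r : ℤ)]
      refine emod_of_zmod (r := r) ?_
      have := c3 v
      push_cast
      exact this

lemma fin_val_eq {r : ℕ} (hr : 0 < r) (w : Fin r) (s : ℤ)
    (h : ((w : ℕ) : ZMod r) = (s : ZMod r)) : ((w : ℕ) : ℤ) = s % (r : ℤ) := by
  have h' : ((w : ℕ) : ℤ) % (r : ℤ) = s % (r : ℤ) := by
    refine emod_of_zmod (r := r) ?_
    push_cast
    exact h
  rw [← h']
  refine (Int.emod_eq_of_lt (by positivity) ?_).symm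
  exact_mod_cast w.2

lemma even_card_nonfixed {m : ℕ} (G : LegGraph m) :
    Even ((Finset.univ.filter (fun h : G.H => G.ι h ≠ h)).card) := by
  classical
  have hsum : ∑ h ∈ Finset.univ.filter (fun h : G.H => G.ι h ≠ h), (1 : ZMod 2) = 0 := by
    refine Finset.sum_involution (fun h _ => G.ι h) (fun a ha => by decide)
      (fun a ha h1 => by simpa using (Finset.mem_filter.1 ha).2) ?_ ?_
    · intro a ha
      simp only [Finset.mem_filter, Finset.mem_univ, true_and] at ha ⊢
      rw [G.ι_invol]
      exact fun hc => ha hc.symm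
    · intro a ha
      exact G.ι_invol a
  rw [Finset.sum_const, nsmul_eq_mul, mul_one] at hsum
  have := (ZMod.natCast_eq_zero_iff _ _).1 hsum
  exact even_iff_two_dvd.2 this

end SepProof
namespace SepProof

section Split

variable {n n₁ n₂ : ℕ} {G : LegGraph n} {G₁ : LegGraph (n₁ + 1)} {G₂ : LegGraph (n₂ + 1)}
  {h₁ h₂ : G.H} (E : EdgeSplit G G₁ G₂ h₁ h₂)

include E

lemma hι₁' : G.ι h₁ ≠ h₁ := by rw [E.he]; exact E.hne.symm

lemma ι_h₂ : G.ι h₂ = h₁ := by rw [← E.he, G.ι_invol]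

lemma hι₂' : G.ι h₂ ≠ h₂ := by rw [ι_h₂ E]; exact E.hne

lemma ne_h₁_of_inl {h : G.H} {a : G₁.H} (hx : E.eH h = Sum.inl a)
    (ha : a ≠ G₁.leg (Fin.last n₁)) : h ≠ h₁ := by
  intro hc; subst hc
  rw [E.map_h₁] at hx
  exact ha (Sum.inl_injective hx).symm

lemma ne_h₂_of_inl {h : G.H} {a : G₁.H} (hx : E.eH h = Sum.inl a) : h ≠ h₂ := by
  intro hc; subst hc
  rw [E.map_h₂] at hx
  exact Sum.inr_ne_inl hx

lemma ne_h₂_of_inr {h : G.H} {b : G₂.H} (hx : E.eH h = Sum.inr b)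
    (hb : b ≠ G₂.leg (Fin.last n₂)) : h ≠ h₂ := by
  intro hc; subst hc
  rw [E.map_h₂] at hx
  exact hb (Sum.inr_injective hx).symm

lemma ne_h₁_of_inr {h : G.H} {b : G₂.H} (hx : E.eH h = Sum.inr b) : h ≠ h₁ := by
  intro hc; subst hc
  rw [E.map_h₁] at hx
  exact Sum.inl_ne_inr hx

lemma isLeft_root (h : G.H) : (E.eV (G.root h)).isLeft = (E.eH h).isLeft := by
  rw [E.root_compat]
  cases E.eH h <;> rfl

/-- The sum of the two leg-sums is zero. -/
lemma s_sum (A : Fin n → ℤ) (hA : ∑ i, A i = 0) :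
    (∑ j : Fin n₁, A (E.σ.symm (Sum.inl j))) + (∑ j : Fin n₂, A (E.σ.symm (Sum.inr j))) = 0 := by
  rw [← Fintype.sum_sum_type (fun x : Fin n₁ ⊕ Fin n₂ => A (E.σ.symm x))]
  rw [Equiv.sum_comp E.σ.symm A, hA]

/-- Key lemma: any weighting is forced to take value `-s₁` at `h₁`. -/
lemma forced₁ (A : Fin n → ℤ) {r : ℕ} {w : G.H → Fin r}
    (hw : w ∈ G.weightings 0 A r) :
    ((w h₁ : ℕ) : ZMod r) = ((- ∑ j : Fin n₁, A (E.σ.symm (Sum.inl j)) : ℤ) : ZMod r) := by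
  classical
  obtain ⟨c1, c2, c3⟩ := (mem_weightings_iff G A r w).1 hw
  set f : G.H → ZMod r := fun h => ((w h : ℕ) : ZMod r) with hf
  set g : G.H → ZMod r := fun h => if (E.eH h).isLeft then f h else 0 with hg
  -- the total sum of g is zero, by the vertex conditions
  have hg0 : ∑ h : G.H, g h = 0 := by
    rw [← Finset.sum_fiberwise Finset.univ G.root g]
    refine Finset.sum_eq_zero fun v _ => ?_
    by_cases hv : (E.eV v).isLeft
    · rw [Finset.sum_congr rfl (fun h hh => ?_), c3 v]
      rw [Finset.mem_filter] at hh
      rw [hg]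
      simp only
      rw [← hh.2, isLeft_root E] at hv
      rw [if_pos hv]
    · refine Finset.sum_eq_zero fun h hh => ?_
      rw [Finset.mem_filter] at hh
      rw [hg]
      simp only
      rw [← hh.2, isLeft_root E] at hv
      rw [if_neg hv]
  -- split the sum over legs, h₁, h₂, and the rest
  have hsplit := Finset.sum_filter_add_sum_filter_not Finset.univ (fun h : G.H => G.ι h = h) g
  -- sum over legs
  have hlegs : ∑ h ∈ Finset.univ.filter (fun h : G.H => G.ι h = h), g h
      = ((∑ j : Fin n₁, A (E.σ.symm (Sum.inl j)) : ℤ) : ZMod r) := by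
    rw [← Finset.sum_bij (i := fun (i : Fin n) _ => G.leg i)
      (s := (Finset.univ : Finset (Fin n)))
      (t := Finset.univ.filter (fun h : G.H => G.ι h = h))
      (g := g) (f := fun i => g (G.leg i))
      (fun i _ => by simp [(G.leg_iff (G.leg i)).2 ⟨i, rfl⟩])
      (fun i _ j _ hij => G.leg_inj hij)
      (fun h hh => by
        obtain ⟨i, hi⟩ := (G.leg_iff h).1 (Finset.mem_filter.1 hh).2
        exact ⟨i, Finset.mem_univ i, hi⟩)
      (fun i _ => rfl)]
    have hterm : ∀ i : Fin n, g (G.leg i)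
        = Sum.elim (fun j : Fin n₁ => ((A (E.σ.symm (Sum.inl j)) : ℤ) : ZMod r))
            (fun _ : Fin n₂ => 0) (E.σ i) := by
      intro i
      rw [hg]
      simp only
      rcases hσ : E.σ i with j | j
      · have hside : (E.eH (G.leg i)).isLeft = true := by rw [E.leg_compat, hσ]; rfl
        rw [if_pos hside, hf]
        simp only
        rw [c1 i, Sum.elim_inl, ← hσ, Equiv.symm_apply_apply]
      · have hside : ¬ (E.eH (G.leg i)).isLeft = true := by rw [E.leg_compat, hσ]; simp
        rw [if_neg hside, Sum.elim_inr]
    rw [Finset.sum_congr rfl (fun i _ => hterm i)]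
    rw [Equiv.sum_comp E.σ
      (fun x => Sum.elim (fun j : Fin n₁ => ((A (E.σ.symm (Sum.inl j)) : ℤ) : ZMod r))
            (fun _ : Fin n₂ => 0) x)]
    rw [Fintype.sum_sum_type]
    simp only [Sum.elim_inl, Sum.elim_inr, Finset.sum_const_zero, add_zero]
    push_cast
    rfl
  -- the rest of the non-fixed half-edges
  have hne1 : G.ι h₁ ≠ h₁ := hι₁' E
  have hne2 : G.ι h₂ ≠ h₂ := hι₂' E
  set rest := Finset.univ.filter (fun h : G.H => G.ι h ≠ h ∧ h ≠ h₁ ∧ h ≠ h₂) with hrest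
  have hset : Finset.univ.filter (fun h : G.H => ¬ G.ι h = h)
      = insert h₁ (insert h₂ rest) := by
    ext h
    simp only [hrest, Finset.mem_filter, Finset.mem_univ, true_and, Finset.mem_insert]
    constructor
    · intro hh
      by_cases e1 : h = h₁
      · exact Or.inl e1
      by_cases e2 : h = h₂
      · exact Or.inr (Or.inl e2)
      exact Or.inr (Or.inr ⟨hh, e1, e2⟩)
    · rintro (rfl | rfl | ⟨a, -, -⟩)
      exacts [hne1, hne2, a]
  have h1mem : h₁ ∉ insert h₂ rest := by
    simp [hrest, E.hne]
  have h2mem : h₂ ∉ rest := by simp [hrest]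
  have hrest0 : ∑ h ∈ rest, g h = 0 := by
    refine Finset.sum_involution (fun h _ => G.ι h) ?_ ?_ ?_ ?_
    · intro a ha
      simp only [hrest, Finset.mem_filter, Finset.mem_univ, true_and] at ha
      obtain ⟨ha0, ha1, ha2⟩ := ha
      have hsides : (E.eH (G.ι a)).isLeft = (E.eH a).isLeft := by
        rw [E.ι_compat a ha1 ha2]
        cases E.eH a <;> rfl
      rw [hg]
      simp only
      rw [hsides]
      by_cases hl : (E.eH a).isLeft
      · rw [if_pos hl, if_pos hl, hf]
        exact c2 a ha0
      · rw [if_neg hl, if_neg hl, add_zero]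
    · intro a ha _
      exact fun hc => ((Finset.mem_filter.1 ha).2).1 hc
    · intro a ha
      simp only [hrest, Finset.mem_filter, Finset.mem_univ, true_and] at ha ⊢
      obtain ⟨ha0, ha1, ha2⟩ := ha
      refine ⟨?_, ?_, ?_⟩
      · rw [G.ι_invol]; exact fun hc => ha0 hc.symm
      · intro hc
        have : a = G.ι h₁ := by rw [← hc, G.ι_invol]
        rw [E.he] at this
        exact ha2 this
      · intro hc
        have : a = G.ι h₂ := by rw [← hc, G.ι_invol]
        rw [ι_h₂ E] at this
        exact ha1 this
    · intro a _
      exact G.ι_invol a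
  have hgh₁ : g h₁ = f h₁ := by
    rw [hg]
    simp only
    rw [if_pos (by rw [E.map_h₁]; rfl)]
  have hgh₂ : g h₂ = 0 := by
    rw [hg]
    simp only
    rw [if_neg (by rw [E.map_h₂]; simp)]
  rw [hset, Finset.sum_insert h1mem, Finset.sum_insert h2mem, hrest0, hgh₁, hgh₂,
    hg0, hlegs] at hsplit
  have hfin : f h₁ = - ((∑ j : Fin n₁, A (E.σ.symm (Sum.inl j)) : ℤ) : ZMod r) := by
    linear_combination hsplit
  show f h₁ = _
  rw [hfin, Int.cast_neg]

/-- Forced value at `h₂`. -/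
lemma forced₂ (A : Fin n → ℤ) (hA : ∑ i, A i = 0) {r : ℕ} {w : G.H → Fin r}
    (hw : w ∈ G.weightings 0 A r) :
    ((w h₂ : ℕ) : ZMod r) = ((- ∑ j : Fin n₂, A (E.σ.symm (Sum.inr j)) : ℤ) : ZMod r) := by
  obtain ⟨-, c2, -⟩ := (mem_weightings_iff G A r w).1 hw
  have h12 := c2 h₁ (hι₁' E)
  rw [E.he] at h12
  have hf₁ := forced₁ E A hw
  have hs := s_sum E A hA
  have : ((w h₂ : ℕ) : ZMod r) = - ((w h₁ : ℕ) : ZMod r) := by linear_combination h12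
  have h21 : (- ∑ j : Fin n₂, A (E.σ.symm (Sum.inr j)) : ℤ)
      = ∑ j : Fin n₁, A (E.σ.symm (Sum.inl j)) := by omega
  rw [this, hf₁, h21, Int.cast_neg, neg_neg]

end Split

end SepProof
namespace SepProof

section Split2

variable {n n₁ n₂ : ℕ} {G : LegGraph n} {G₁ : LegGraph (n₁ + 1)} {G₂ : LegGraph (n₂ + 1)}
  {h₁ h₂ : G.H} (E : EdgeSplit G G₁ G₂ h₁ h₂)

include E

lemma fiber_sum_left {M : Type*} [AddCommMonoid M] (F : G.H → M) (v : G₁.V) :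
    ∑ h ∈ Finset.univ.filter (fun h : G₁.H => G₁.root h = v), F (E.eH.symm (Sum.inl h))
      = ∑ h ∈ Finset.univ.filter (fun h : G.H => G.root h = E.eV.symm (Sum.inl v)), F h := by
  refine Finset.sum_bij (fun (h : G₁.H) _ => E.eH.symm (Sum.inl h)) ?_ ?_ ?_ (fun _ _ => rfl)
  · intro a ha
    rw [Finset.mem_filter] at ha ⊢
    refine ⟨Finset.mem_univ _, ?_⟩
    have hrc := E.root_compat (E.eH.symm (Sum.inl a))
    rw [Equiv.apply_symm_apply] at hrc
    rw [Equiv.eq_symm_apply, hrc, Sum.map_inl, ha.2]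
  · intro a _ b _ hab
    exact Sum.inl_injective (E.eH.symm.injective hab)
  · intro b hb
    rw [Finset.mem_filter] at hb
    have hrc := E.root_compat b
    rw [hb.2, Equiv.apply_symm_apply] at hrc
    rcases hx : E.eH b with a | c
    · rw [hx, Sum.map_inl] at hrc
      refine ⟨a, Finset.mem_filter.2 ⟨Finset.mem_univ _, Sum.inl_injective hrc.symm⟩, ?_⟩
      show E.eH.symm (Sum.inl a) = b
      rw [← hx, Equiv.symm_apply_apply]
    · rw [hx, Sum.map_inr] at hrc
      exact absurd hrc (by simp)

lemma fiber_sum_right {M : Type*} [AddCommMonoid M] (F : G.H → M) (v : G₂.V) :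
    ∑ h ∈ Finset.univ.filter (fun h : G₂.H => G₂.root h = v), F (E.eH.symm (Sum.inr h))
      = ∑ h ∈ Finset.univ.filter (fun h : G.H => G.root h = E.eV.symm (Sum.inr v)), F h := by
  refine Finset.sum_bij (fun (h : G₂.H) _ => E.eH.symm (Sum.inr h)) ?_ ?_ ?_ (fun _ _ => rfl)
  · intro a ha
    rw [Finset.mem_filter] at ha ⊢
    refine ⟨Finset.mem_univ _, ?_⟩
    have hrc := E.root_compat (E.eH.symm (Sum.inr a))
    rw [Equiv.apply_symm_apply] at hrc
    rw [Equiv.eq_symm_apply, hrc, Sum.map_inr, ha.2]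
  · intro a _ b _ hab
    exact Sum.inr_injective (E.eH.symm.injective hab)
  · intro b hb
    rw [Finset.mem_filter] at hb
    have hrc := E.root_compat b
    rw [hb.2, Equiv.apply_symm_apply] at hrc
    rcases hx : E.eH b with a | c
    · rw [hx, Sum.map_inl] at hrc
      exact absurd hrc (by simp)
    · rw [hx, Sum.map_inr] at hrc
      refine ⟨c, Finset.mem_filter.2 ⟨Finset.mem_univ _, Sum.inr_injective hrc.symm⟩, ?_⟩
      show E.eH.symm (Sum.inr c) = b
      rw [← hx, Equiv.symm_apply_apply]

lemma card_V : Fintype.card G.V = Fintype.card G₁.V + Fintype.card G₂.V := by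
  rw [Fintype.card_congr E.eV, Fintype.card_sum]

omit E in
lemma fixed_of_leg {m : ℕ} (Gg : LegGraph m) (i : Fin m) : Gg.ι (Gg.leg i) = Gg.leg i :=
  (Gg.leg_iff _).2 ⟨i, rfl⟩

lemma card_nonfixed :
    (Finset.univ.filter fun h : G.H => G.ι h ≠ h).card
      = (Finset.univ.filter fun h : G₁.H => G₁.ι h ≠ h).card
        + (Finset.univ.filter fun h : G₂.H => G₂.ι h ≠ h).card + 2 := by
  classical
  set T₁ := (Finset.univ.filter fun a : G₁.H => G₁.ι a ≠ a).image
    (fun a => E.eH.symm (Sum.inl a)) with hT₁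
  set T₂ := (Finset.univ.filter fun b : G₂.H => G₂.ι b ≠ b).image
    (fun b => E.eH.symm (Sum.inr b)) with hT₂
  have memT₁ : ∀ h : G.H, h ∈ T₁ ↔ ∃ a : G₁.H, G₁.ι a ≠ a ∧ E.eH h = Sum.inl a := by
    intro h
    rw [hT₁, Finset.mem_image]
    constructor
    · rintro ⟨a, ha, rfl⟩
      exact ⟨a, (Finset.mem_filter.1 ha).2, Equiv.apply_symm_apply _ _⟩
    · rintro ⟨a, ha, hx⟩
      exact ⟨a, Finset.mem_filter.2 ⟨Finset.mem_univ _, ha⟩, by rw [← hx, Equiv.symm_apply_apply]⟩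
  have memT₂ : ∀ h : G.H, h ∈ T₂ ↔ ∃ b : G₂.H, G₂.ι b ≠ b ∧ E.eH h = Sum.inr b := by
    intro h
    rw [hT₂, Finset.mem_image]
    constructor
    · rintro ⟨b, hb, rfl⟩
      exact ⟨b, (Finset.mem_filter.1 hb).2, Equiv.apply_symm_apply _ _⟩
    · rintro ⟨b, hb, hx⟩
      exact ⟨b, Finset.mem_filter.2 ⟨Finset.mem_univ _, hb⟩, by rw [← hx, Equiv.symm_apply_apply]⟩
  have hset : (Finset.univ.filter fun h : G.H => G.ι h ≠ h)
      = insert h₁ (insert h₂ (T₁ ∪ T₂)) := by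
    ext h
    simp only [Finset.mem_filter, Finset.mem_univ, true_and, Finset.mem_insert,
      Finset.mem_union]
    constructor
    · intro hh
      by_cases e1 : h = h₁
      · exact Or.inl e1
      by_cases e2 : h = h₂
      · exact Or.inr (Or.inl e2)
      refine Or.inr (Or.inr ?_)
      rcases hx : E.eH h with a | b
      · refine Or.inl ((memT₁ h).2 ⟨a, ?_, hx⟩)
        intro hc
        apply hh
        apply E.eH.injective
        rw [E.ι_compat h e1 e2, hx, Sum.map_inl, hc]
      · refine Or.inr ((memT₂ h).2 ⟨b, ?_, hx⟩)
        intro hc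
        apply hh
        apply E.eH.injective
        rw [E.ι_compat h e1 e2, hx, Sum.map_inr, hc]
    · rintro (rfl | rfl | hT)
      · exact hι₁' E
      · exact hι₂' E
      intro hfix
      have e1 : h ≠ h₁ := fun hc => hι₁' E (hc ▸ hfix)
      have e2 : h ≠ h₂ := fun hc => hι₂' E (hc ▸ hfix)
      rcases hT with hT | hT
      · obtain ⟨a, ha, hx⟩ := (memT₁ h).1 hT
        apply ha
        apply Sum.inl_injective
        rw [← hx, ← Sum.map_inl (f := G₁.ι) (g := G₂.ι), ← hx, ← E.ι_compat h e1 e2, hfix]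
      · obtain ⟨b, hb, hx⟩ := (memT₂ h).1 hT
        apply hb
        apply Sum.inr_injective
        rw [← hx, ← Sum.map_inr (f := G₁.ι) (g := G₂.ι), ← hx, ← E.ι_compat h e1 e2, hfix]
  have hlegfix₁ : G₁.ι (G₁.leg (Fin.last n₁)) = G₁.leg (Fin.last n₁) := fixed_of_leg G₁ _
  have hlegfix₂ : G₂.ι (G₂.leg (Fin.last n₂)) = G₂.leg (Fin.last n₂) := fixed_of_leg G₂ _
  have h1T : h₁ ∉ T₁ ∪ T₂ := by
    rw [Finset.mem_union]
    rintro (hT | hT)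
    · obtain ⟨a, ha, hx⟩ := (memT₁ h₁).1 hT
      rw [E.map_h₁] at hx
      exact ha (by rw [← Sum.inl_injective hx, hlegfix₁])
    · obtain ⟨b, _, hx⟩ := (memT₂ h₁).1 hT
      rw [E.map_h₁] at hx
      exact Sum.inl_ne_inr hx
  have h2T : h₂ ∉ T₁ ∪ T₂ := by
    rw [Finset.mem_union]
    rintro (hT | hT)
    · obtain ⟨a, _, hx⟩ := (memT₁ h₂).1 hT
      rw [E.map_h₂] at hx
      exact Sum.inr_ne_inl hx
    · obtain ⟨b, hb, hx⟩ := (memT₂ h₂).1 hT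
      rw [E.map_h₂] at hx
      exact hb (by rw [← Sum.inr_injective hx, hlegfix₂])
  have hdisj : Disjoint T₁ T₂ := by
    rw [Finset.disjoint_left]
    intro h hT hT'
    obtain ⟨a, _, hx⟩ := (memT₁ h).1 hT
    obtain ⟨b, _, hx'⟩ := (memT₂ h).1 hT'
    rw [hx] at hx'
    exact Sum.inl_ne_inr hx'
  rw [hset, Finset.card_insert_of_notMem (by
      simp only [Finset.mem_insert]
      rintro (hc | hc)
      exacts [E.hne hc, h1T hc]),
    Finset.card_insert_of_notMem h2T, Finset.card_union_of_disjoint hdisj,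
    hT₁, hT₂, Finset.card_image_of_injective _ (fun a b hab =>
      Sum.inl_injective (E.eH.symm.injective hab)),
    Finset.card_image_of_injective _ (fun a b hab =>
      Sum.inr_injective (E.eH.symm.injective hab))]

lemma h1_add : G.h1 = G₁.h1 + G₂.h1 := by
  have hV := card_V E
  have hNF := card_nonfixed E
  obtain ⟨k, hk⟩ := even_card_nonfixed G₁
  obtain ⟨l, hl⟩ := even_card_nonfixed G₂
  unfold LegGraph.h1 LegGraph.edgeCard
  rw [hNF, hV, hk, hl]
  have : (k + k + (l + l) + 2) / 2 = k + l + 1 := by omega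
  rw [this]
  have hk2 : (k + k) / 2 = k := by omega
  have hl2 : (l + l) / 2 = l := by omega
  rw [hk2, hl2]
  push_cast
  ring

end Split2

end SepProof
namespace SepProof

section Split3

variable {n n₁ n₂ : ℕ} {G : LegGraph n} {G₁ : LegGraph (n₁ + 1)} {G₂ : LegGraph (n₂ + 1)}
  {h₁ h₂ : G.H} (E : EdgeSplit G G₁ G₂ h₁ h₂)

include E

lemma symm_inl_legLast : E.eH.symm (Sum.inl (G₁.leg (Fin.last n₁))) = h₁ := by
  rw [Equiv.symm_apply_eq, E.map_h₁]

lemma symm_inr_legLast : E.eH.symm (Sum.inr (G₂.leg (Fin.last n₂))) = h₂ := by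
  rw [Equiv.symm_apply_eq, E.map_h₂]

lemma mem_left (A : Fin n → ℤ) {r : ℕ} {w : G.H → Fin r}
    (hw : w ∈ G.weightings 0 A r) :
    (fun a : G₁.H => w (E.eH.symm (Sum.inl a))) ∈ G₁.weightings 0
      (Fin.snoc (fun j : Fin n₁ => A (E.σ.symm (Sum.inl j)))
        (- ∑ j : Fin n₁, A (E.σ.symm (Sum.inl j)))) r := by
  rw [mem_weightings_iff]
  obtain ⟨c1, c2, c3⟩ := (mem_weightings_iff G A r w).1 hw
  refine ⟨fun i => ?_, fun h hh => ?_, fun v => ?_⟩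
  · induction i using Fin.lastCases with
    | last =>
      rw [Fin.snoc_last]
      show ((w (E.eH.symm (Sum.inl (G₁.leg (Fin.last n₁)))) : ℕ) : ZMod r) = _
      rw [symm_inl_legLast E]
      exact forced₁ E A hw
    | cast j =>
      rw [Fin.snoc_castSucc]
      show ((w (E.eH.symm (Sum.inl (G₁.leg j.castSucc))) : ℕ) : ZMod r) = _
      have hcompat := E.leg_compat (E.σ.symm (Sum.inl j))
      rw [Equiv.apply_symm_apply, Sum.map_inl] at hcompat
      have hx : E.eH.symm (Sum.inl (G₁.leg j.castSucc)) = G.leg (E.σ.symm (Sum.inl j)) := by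
        rw [Equiv.symm_apply_eq, hcompat]
      rw [hx]
      exact c1 _
  · -- edge condition
    show ((w (E.eH.symm (Sum.inl h)) : ℕ) : ZMod r)
      + ((w (E.eH.symm (Sum.inl (G₁.ι h))) : ℕ) : ZMod r) = 0
    set x := E.eH.symm (Sum.inl h) with hxdef
    have hxe : E.eH x = Sum.inl h := Equiv.apply_symm_apply _ _
    have hx1 : x ≠ h₁ := ne_h₁_of_inl E hxe
      (fun hc => hh (by rw [hc]; exact fixed_of_leg G₁ _))
    have hx2 : x ≠ h₂ := ne_h₂_of_inl E hxe
    have hxι : E.eH (G.ι x) = Sum.inl (G₁.ι h) := by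
      rw [E.ι_compat x hx1 hx2, hxe, Sum.map_inl]
    have hιx : E.eH.symm (Sum.inl (G₁.ι h)) = G.ι x := by
      rw [Equiv.symm_apply_eq, hxι]
    have hxne : G.ι x ≠ x := by
      intro hc
      apply hh
      apply Sum.inl_injective
      rw [← hxι, hc, hxe]
    rw [hιx]
    exact c2 x hxne
  · rw [fiber_sum_left E (fun h => ((w h : ℕ) : ZMod r)) v]
    exact c3 _

lemma mem_right (A : Fin n → ℤ) (hA : ∑ i, A i = 0) {r : ℕ} {w : G.H → Fin r}
    (hw : w ∈ G.weightings 0 A r) :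
    (fun b : G₂.H => w (E.eH.symm (Sum.inr b))) ∈ G₂.weightings 0
      (Fin.snoc (fun j : Fin n₂ => A (E.σ.symm (Sum.inr j)))
        (- ∑ j : Fin n₂, A (E.σ.symm (Sum.inr j)))) r := by
  rw [mem_weightings_iff]
  obtain ⟨c1, c2, c3⟩ := (mem_weightings_iff G A r w).1 hw
  refine ⟨fun i => ?_, fun h hh => ?_, fun v => ?_⟩
  · induction i using Fin.lastCases with
    | last =>
      rw [Fin.snoc_last]
      show ((w (E.eH.symm (Sum.inr (G₂.leg (Fin.last n₂)))) : ℕ) : ZMod r) = _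
      rw [symm_inr_legLast E]
      exact forced₂ E A hA hw
    | cast j =>
      rw [Fin.snoc_castSucc]
      show ((w (E.eH.symm (Sum.inr (G₂.leg j.castSucc))) : ℕ) : ZMod r) = _
      have hcompat := E.leg_compat (E.σ.symm (Sum.inr j))
      rw [Equiv.apply_symm_apply, Sum.map_inr] at hcompat
      have hx : E.eH.symm (Sum.inr (G₂.leg j.castSucc)) = G.leg (E.σ.symm (Sum.inr j)) := by
        rw [Equiv.symm_apply_eq, hcompat]
      rw [hx]
      exact c1 _
  · show ((w (E.eH.symm (Sum.inr h)) : ℕ) : ZMod r)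
      + ((w (E.eH.symm (Sum.inr (G₂.ι h))) : ℕ) : ZMod r) = 0
    set x := E.eH.symm (Sum.inr h) with hxdef
    have hxe : E.eH x = Sum.inr h := Equiv.apply_symm_apply _ _
    have hx2 : x ≠ h₂ := ne_h₂_of_inr E hxe
      (fun hc => hh (by rw [hc]; exact fixed_of_leg G₂ _))
    have hx1 : x ≠ h₁ := ne_h₁_of_inr E hxe
    have hxι : E.eH (G.ι x) = Sum.inr (G₂.ι h) := by
      rw [E.ι_compat x hx1 hx2, hxe, Sum.map_inr]
    have hιx : E.eH.symm (Sum.inr (G₂.ι h)) = G.ι x := by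
      rw [Equiv.symm_apply_eq, hxι]
    have hxne : G.ι x ≠ x := by
      intro hc
      apply hh
      apply Sum.inr_injective
      rw [← hxι, hc, hxe]
    rw [hιx]
    exact c2 x hxne
  · rw [fiber_sum_right E (fun h => ((w h : ℕ) : ZMod r)) v]
    exact c3 _

lemma mem_glue (A : Fin n → ℤ) (hA : ∑ i, A i = 0) {r : ℕ}
    {w₁ : G₁.H → Fin r} {w₂ : G₂.H → Fin r}
    (hw₁ : w₁ ∈ G₁.weightings 0
      (Fin.snoc (fun j : Fin n₁ => A (E.σ.symm (Sum.inl j)))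
        (- ∑ j : Fin n₁, A (E.σ.symm (Sum.inl j)))) r)
    (hw₂ : w₂ ∈ G₂.weightings 0
      (Fin.snoc (fun j : Fin n₂ => A (E.σ.symm (Sum.inr j)))
        (- ∑ j : Fin n₂, A (E.σ.symm (Sum.inr j)))) r) :
    (fun h : G.H => Sum.elim w₁ w₂ (E.eH h)) ∈ G.weightings 0 A r := by
  rw [mem_weightings_iff]
  obtain ⟨c1, c2, c3⟩ := (mem_weightings_iff G₁ _ r w₁).1 hw₁
  obtain ⟨d1, d2, d3⟩ := (mem_weightings_iff G₂ _ r w₂).1 hw₂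
  refine ⟨fun i => ?_, fun h hh => ?_, fun v => ?_⟩
  · show (((Sum.elim w₁ w₂ (E.eH (G.leg i)) : Fin r) : ℕ) : ZMod r) = _
    rcases hσ : E.σ i with j | j
    · have hi : i = E.σ.symm (Sum.inl j) := by rw [← hσ, Equiv.symm_apply_apply]
      rw [E.leg_compat, hσ, Sum.map_inl, Sum.elim_inl]
      have := c1 j.castSucc
      rw [Fin.snoc_castSucc] at this
      rw [this, hi]
    · have hi : i = E.σ.symm (Sum.inr j) := by rw [← hσ, Equiv.symm_apply_apply]
      rw [E.leg_compat, hσ, Sum.map_inr, Sum.elim_inr]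
      have := d1 j.castSucc
      rw [Fin.snoc_castSucc] at this
      rw [this, hi]
  · show (((Sum.elim w₁ w₂ (E.eH h) : Fin r) : ℕ) : ZMod r)
      + (((Sum.elim w₁ w₂ (E.eH (G.ι h)) : Fin r) : ℕ) : ZMod r) = 0
    have hval₁ : ((w₁ (G₁.leg (Fin.last n₁)) : ℕ) : ZMod r)
        = ((- ∑ j : Fin n₁, A (E.σ.symm (Sum.inl j)) : ℤ) : ZMod r) := by
      have := c1 (Fin.last n₁)
      rw [Fin.snoc_last] at this
      exact this
    have hval₂ : ((w₂ (G₂.leg (Fin.last n₂)) : ℕ) : ZMod r)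
        = ((- ∑ j : Fin n₂, A (E.σ.symm (Sum.inr j)) : ℤ) : ZMod r) := by
      have := d1 (Fin.last n₂)
      rw [Fin.snoc_last] at this
      exact this
    have hs := s_sum E A hA
    by_cases e1 : h = h₁
    · subst e1
      rw [E.he, E.map_h₁, E.map_h₂, Sum.elim_inl, Sum.elim_inr, hval₁, hval₂]
      rw [← Int.cast_add, ← Int.cast_zero]
      congr 1
      omega
    by_cases e2 : h = h₂
    · subst e2
      rw [ι_h₂ E, E.map_h₁, E.map_h₂, Sum.elim_inl, Sum.elim_inr, hval₁, hval₂]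
      rw [← Int.cast_add, ← Int.cast_zero]
      congr 1
      omega
    rcases hx : E.eH h with a | b
    · rw [E.ι_compat h e1 e2, hx, Sum.map_inl, Sum.elim_inl, Sum.elim_inl]
      refine c2 a ?_
      intro hc
      apply hh
      apply E.eH.injective
      rw [E.ι_compat h e1 e2, hx, Sum.map_inl, hc]
    · rw [E.ι_compat h e1 e2, hx, Sum.map_inr, Sum.elim_inr, Sum.elim_inr]
      refine d2 b ?_
      intro hc
      apply hh
      apply E.eH.injective
      rw [E.ι_compat h e1 e2, hx, Sum.map_inr, hc]
  · rcases hv : E.eV v with v₁ | v₂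
    · have hv' : v = E.eV.symm (Sum.inl v₁) := by rw [← hv, Equiv.symm_apply_apply]
      rw [hv', ← fiber_sum_left E
        (fun h => (((Sum.elim w₁ w₂ (E.eH h) : Fin r) : ℕ) : ZMod r)) v₁]
      rw [Finset.sum_congr rfl (fun a _ => ?_)]
      · exact c3 v₁
      · show (((Sum.elim w₁ w₂ (E.eH (E.eH.symm (Sum.inl a))) : Fin r) : ℕ) : ZMod r) = _
        rw [Equiv.apply_symm_apply, Sum.elim_inl]
    · have hv' : v = E.eV.symm (Sum.inr v₂) := by rw [← hv, Equiv.symm_apply_apply]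
      rw [hv', ← fiber_sum_right E
        (fun h => (((Sum.elim w₁ w₂ (E.eH h) : Fin r) : ℕ) : ZMod r)) v₂]
      rw [Finset.sum_congr rfl (fun a _ => ?_)]
      · exact d3 v₂
      · show (((Sum.elim w₁ w₂ (E.eH (E.eH.symm (Sum.inr a))) : Fin r) : ℕ) : ZMod r) = _
        rw [Equiv.apply_symm_apply, Sum.elim_inr]

end Split3

end SepProof
namespace SepProof

section Split4

open MvPolynomial

variable {n n₁ n₂ : ℕ} {G : LegGraph n} {G₁ : LegGraph (n₁ + 1)} {G₂ : LegGraph (n₂ + 1)}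
  {h₁ h₂ : G.H} (E : EdgeSplit G G₁ G₂ h₁ h₂)

include E

lemma sum_eval (A : Fin n → ℤ) (hA : ∑ i, A i = 0)
    (c₁ c₂ : ℕ) (hι₁ : G.ι h₁ ≠ h₁) (hι₂ : G.ι h₂ ≠ h₂)
    (ψ₁ : G₁.NonLeg → G.NonLeg) (hψ₁ : ∀ h : G₁.NonLeg, E.eH (ψ₁ h).1 = Sum.inl h.1)
    (ψ₂ : G₂.NonLeg → G.NonLeg) (hψ₂ : ∀ h : G₂.NonLeg, E.eH (ψ₂ h).1 = Sum.inr h.1)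
    (d₁ : G₁.NonLeg →₀ ℕ) (d₂ : G₂.NonLeg →₀ ℕ) {r : ℕ} (hr : 0 < r) :
    ∑ w ∈ G.weightings 0 A r,
      MvPolynomial.eval (fun h : G.NonLeg => ((w h.1 : ℕ) : ℤ))
        (MvPolynomial.X (⟨h₁, hι₁⟩ : G.NonLeg) ^ c₁ *
          MvPolynomial.X (⟨h₂, hι₂⟩ : G.NonLeg) ^ c₂ *
          MvPolynomial.rename ψ₁ (MvPolynomial.monomial d₁ 1) *
          MvPolynomial.rename ψ₂ (MvPolynomial.monomial d₂ 1))
      = ((- ∑ j : Fin n₁, A (E.σ.symm (Sum.inl j))) % (r : ℤ)) ^ c₁ *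
        ((- ∑ j : Fin n₂, A (E.σ.symm (Sum.inr j))) % (r : ℤ)) ^ c₂ *
        ((∑ w₁ ∈ G₁.weightings 0
            (Fin.snoc (fun j : Fin n₁ => A (E.σ.symm (Sum.inl j)))
              (- ∑ j : Fin n₁, A (E.σ.symm (Sum.inl j)))) r,
            MvPolynomial.eval (fun h : G₁.NonLeg => ((w₁ h.1 : ℕ) : ℤ))
              (MvPolynomial.monomial d₁ 1)) *
         (∑ w₂ ∈ G₂.weightings 0
            (Fin.snoc (fun j : Fin n₂ => A (E.σ.symm (Sum.inr j)))
              (- ∑ j : Fin n₂, A (E.σ.symm (Sum.inr j)))) r,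
            MvPolynomial.eval (fun h : G₂.NonLeg => ((w₂ h.1 : ℕ) : ℤ))
              (MvPolynomial.monomial d₂ 1))) := by
  classical
  have key : ∀ w ∈ G.weightings 0 A r,
      MvPolynomial.eval (fun h : G.NonLeg => ((w h.1 : ℕ) : ℤ))
        (MvPolynomial.X (⟨h₁, hι₁⟩ : G.NonLeg) ^ c₁ *
          MvPolynomial.X (⟨h₂, hι₂⟩ : G.NonLeg) ^ c₂ *
          MvPolynomial.rename ψ₁ (MvPolynomial.monomial d₁ 1) *
          MvPolynomial.rename ψ₂ (MvPolynomial.monomial d₂ 1))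
      = ((- ∑ j : Fin n₁, A (E.σ.symm (Sum.inl j))) % (r : ℤ)) ^ c₁ *
        ((- ∑ j : Fin n₂, A (E.σ.symm (Sum.inr j))) % (r : ℤ)) ^ c₂ *
        (MvPolynomial.eval (fun h : G₁.NonLeg => ((w (E.eH.symm (Sum.inl h.1)) : ℕ) : ℤ))
            (MvPolynomial.monomial d₁ 1) *
         MvPolynomial.eval (fun h : G₂.NonLeg => ((w (E.eH.symm (Sum.inr h.1)) : ℕ) : ℤ))
            (MvPolynomial.monomial d₂ 1)) := by
    intro w hw
    erw [MvPolynomial.eval_mul, MvPolynomial.eval_mul, MvPolynomial.eval_mul,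
      MvPolynomial.eval_pow, MvPolynomial.eval_pow, MvPolynomial.eval_X,
      MvPolynomial.eval_X, MvPolynomial.eval_rename, MvPolynomial.eval_rename]
    have hv₁ : ((w h₁ : ℕ) : ℤ)
        = (- ∑ j : Fin n₁, A (E.σ.symm (Sum.inl j))) % (r : ℤ) :=
      fin_val_eq hr _ _ (forced₁ E A hw)
    have hv₂ : ((w h₂ : ℕ) : ℤ)
        = (- ∑ j : Fin n₂, A (E.σ.symm (Sum.inr j))) % (r : ℤ) :=
      fin_val_eq hr _ _ (forced₂ E A hA hw)
    have hc₁ : ((fun h : G.NonLeg => ((w h.1 : ℕ) : ℤ)) ∘ ψ₁)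
        = fun h : G₁.NonLeg => ((w (E.eH.symm (Sum.inl h.1)) : ℕ) : ℤ) := by
      funext h
      have : (ψ₁ h).1 = E.eH.symm (Sum.inl h.1) := by
        rw [Equiv.eq_symm_apply, hψ₁ h]
      simp only [Function.comp_apply, this]
    have hc₂ : ((fun h : G.NonLeg => ((w h.1 : ℕ) : ℤ)) ∘ ψ₂)
        = fun h : G₂.NonLeg => ((w (E.eH.symm (Sum.inr h.1)) : ℕ) : ℤ) := by
      funext h
      have : (ψ₂ h).1 = E.eH.symm (Sum.inr h.1) := by
        rw [Equiv.eq_symm_apply, hψ₂ h]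
      simp only [Function.comp_apply, this]
    rw [hc₁, hc₂]
    show ((w h₁ : ℕ) : ℤ) ^ c₁ * ((w h₂ : ℕ) : ℤ) ^ c₂ * _ * _ = _
    rw [hv₁, hv₂]
    ring
  rw [Finset.sum_congr rfl key, ← Finset.mul_sum]
  congr 1
  rw [Finset.sum_mul_sum]
  rw [← Finset.sum_product']
  refine Finset.sum_nbij'
    (i := fun w => ((fun a : G₁.H => w (E.eH.symm (Sum.inl a))),
                    (fun b : G₂.H => w (E.eH.symm (Sum.inr b)))))
    (j := fun p => (fun h : G.H => Sum.elim p.1 p.2 (E.eH h))) ?_ ?_ ?_ ?_ ?_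
  · intro w hw
    rw [Finset.mem_product]
    exact ⟨mem_left E A hw, mem_right E A hA hw⟩
  · intro p hp
    rw [Finset.mem_product] at hp
    exact mem_glue E A hA hp.1 hp.2
  · intro w _
    funext h
    show Sum.elim _ _ (E.eH h) = w h
    rcases hx : E.eH h with a | b
    · show w (E.eH.symm (Sum.inl a)) = w h
      rw [← hx, Equiv.symm_apply_apply]
    · show w (E.eH.symm (Sum.inr b)) = w h
      rw [← hx, Equiv.symm_apply_apply]
  · intro p _
    refine Prod.ext ?_ ?_
    · funext a
      show Sum.elim p.1 p.2 (E.eH (E.eH.symm (Sum.inl a))) = p.1 a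
      rw [Equiv.apply_symm_apply, Sum.elim_inl]
    · funext b
      show Sum.elim p.1 p.2 (E.eH (E.eH.symm (Sum.inr b))) = p.2 b
      rw [Equiv.apply_symm_apply, Sum.elim_inr]
  · intro w _
    rfl

lemma S_eq (A : Fin n → ℤ) (hA : ∑ i, A i = 0)
    (c₁ c₂ : ℕ) (hι₁ : G.ι h₁ ≠ h₁) (hι₂ : G.ι h₂ ≠ h₂)
    (ψ₁ : G₁.NonLeg → G.NonLeg) (hψ₁ : ∀ h : G₁.NonLeg, E.eH (ψ₁ h).1 = Sum.inl h.1)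
    (ψ₂ : G₂.NonLeg → G.NonLeg) (hψ₂ : ∀ h : G₂.NonLeg, E.eH (ψ₂ h).1 = Sum.inr h.1)
    (d₁ : G₁.NonLeg →₀ ℕ) (d₂ : G₂.NonLeg →₀ ℕ) {r : ℕ} (hr : 0 < r) :
    G.S 0 A (MvPolynomial.X (⟨h₁, hι₁⟩ : G.NonLeg) ^ c₁ *
          MvPolynomial.X (⟨h₂, hι₂⟩ : G.NonLeg) ^ c₂ *
          MvPolynomial.rename ψ₁ (MvPolynomial.monomial d₁ 1) *
          MvPolynomial.rename ψ₂ (MvPolynomial.monomial d₂ 1)) r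
      = ((((- ∑ j : Fin n₁, A (E.σ.symm (Sum.inl j))) % (r : ℤ)) : ℤ) : ℚ) ^ c₁ *
        ((((- ∑ j : Fin n₂, A (E.σ.symm (Sum.inr j))) % (r : ℤ)) : ℤ) : ℚ) ^ c₂ *
        (G₁.S 0 (Fin.snoc (fun j : Fin n₁ => A (E.σ.symm (Sum.inl j)))
              (- ∑ j : Fin n₁, A (E.σ.symm (Sum.inl j))))
          (MvPolynomial.monomial d₁ 1) r *
         G₂.S 0 (Fin.snoc (fun j : Fin n₂ => A (E.σ.symm (Sum.inr j)))
              (- ∑ j : Fin n₂, A (E.σ.symm (Sum.inr j))))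
          (MvPolynomial.monomial d₂ 1) r) := by
  unfold LegGraph.S
  have hkey := congrArg (fun z : ℤ => (z : ℚ))
    (sum_eval E A hA c₁ c₂ hι₁ hι₂ ψ₁ hψ₁ ψ₂ hψ₂ d₁ d₂ hr)
  beta_reduce at hkey
  push_cast at hkey
  rw [hkey]
  have hrne : (r : ℚ) ≠ 0 := by positivity
  rw [h1_add E, neg_add, zpow_add₀ hrne]
  ring

end Split4

end SepProof
namespace SepProof

lemma emod_eval {s : ℤ} {r : ℕ} (h : s.natAbs < r) :
    (-s) % (r : ℤ) = if 0 < s then (r : ℤ) - s else -s := by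
  split_ifs with hs
  · have h2 : (-s + (r : ℤ) * 1) % (r : ℤ) = (-s) % (r : ℤ) :=
      Int.add_mul_emod_self_left (-s) (r : ℤ) 1
    rw [mul_one] at h2
    rw [← h2]
    have := Int.emod_eq_of_lt (a := -s + r) (b := (r : ℤ)) (by omega) (by omega)
    omega
  · exact Int.emod_eq_of_lt (by omega) (by omega)

end SepProof
/-- For a separating edge and a monomial `Q = x_{h₁}^{c₁} x_{h₂}^{c₂} Q₁ Q₂`
as before, assuming the three sums are eventually polynomial in `r`, the constant terms
satisfy `S^Γ_{A,0}(Q) = S^{Γ₁}_{(A₁,-s₁),0}(Q₁) · (-s₁)^{c₁} (-s₂)^{c₂} ·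
S^{Γ₂}_{(A₂,-s₂),0}(Q₂)`. -/
theorem separating_edge_S0 {n n₁ n₂ : ℕ} (G : LegGraph n)
    (G₁ : LegGraph (n₁ + 1)) (G₂ : LegGraph (n₂ + 1)) (h₁ h₂ : G.H)
    (E : EdgeSplit G G₁ G₂ h₁ h₂)
    (A : Fin n → ℤ) (hA : ∑ i, A i = 0)
    (s₁ s₂ : ℤ)
    (hs₁ : s₁ = ∑ j : Fin n₁, A (E.σ.symm (Sum.inl j)))
    (hs₂ : s₂ = ∑ j : Fin n₂, A (E.σ.symm (Sum.inr j)))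
    (A₁ : Fin (n₁ + 1) → ℤ)
    (hA₁ : A₁ = Fin.snoc (fun j : Fin n₁ => A (E.σ.symm (Sum.inl j))) (-s₁))
    (A₂ : Fin (n₂ + 1) → ℤ)
    (hA₂ : A₂ = Fin.snoc (fun j : Fin n₂ => A (E.σ.symm (Sum.inr j))) (-s₂)) 
    (c₁ c₂ : ℕ) (hι₁ : G.ι h₁ ≠ h₁) (hι₂ : G.ι h₂ ≠ h₂)
    (ψ₁ : G₁.NonLeg → G.NonLeg) (hψ₁ : ∀ h : G₁.NonLeg, E.eH (ψ₁ h).1 = Sum.inl h.1)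
    (ψ₂ : G₂.NonLeg → G.NonLeg) (hψ₂ : ∀ h : G₂.NonLeg, E.eH (ψ₂ h).1 = Sum.inr h.1)
    (d₁ : G₁.NonLeg →₀ ℕ) (d₂ : G₂.NonLeg →₀ ℕ)
    (Q : MvPolynomial G.NonLeg ℤ)
    (hQ : Q = MvPolynomial.X (⟨h₁, hι₁⟩ : G.NonLeg) ^ c₁ *
      MvPolynomial.X (⟨h₂, hι₂⟩ : G.NonLeg) ^ c₂ *
      MvPolynomial.rename ψ₁ (MvPolynomial.monomial d₁ 1) *
      MvPolynomial.rename ψ₂ (MvPolynomial.monomial d₂ 1))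
    (hev : EvPoly fun r => G.S 0 A Q r)
    (hev₁ : EvPoly fun r => G₁.S 0 A₁ (MvPolynomial.monomial d₁ 1) r)
    (hev₂ : EvPoly fun r => G₂.S 0 A₂ (MvPolynomial.monomial d₂ 1) r) :
    G.S0 0 A Q = G₁.S0 0 A₁ (MvPolynomial.monomial d₁ 1) *
      ((-s₁ : ℤ) : ℚ) ^ c₁ * ((-s₂ : ℤ) : ℚ) ^ c₂ *
      G₂.S0 0 A₂ (MvPolynomial.monomial d₂ 1) := by
  classical
  subst hQ hA₁ hA₂ hs₁ hs₂
  set s₁ := ∑ j : Fin n₁, A (E.σ.symm (Sum.inl j)) with hs₁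
  set s₂ := ∑ j : Fin n₂, A (E.σ.symm (Sum.inr j)) with hs₂
  set p₁ := Classical.choose hev₁ with hp₁
  obtain ⟨N₁, hN₁⟩ := Classical.choose_spec hev₁
  set p₂ := Classical.choose hev₂ with hp₂
  obtain ⟨N₂, hN₂⟩ := Classical.choose_spec hev₂
  set q₁ : Polynomial ℚ :=
    Polynomial.C ((-s₁ : ℤ) : ℚ) + (if 0 < s₁ then Polynomial.X else 0) with hq₁
  set q₂ : Polynomial ℚ :=
    Polynomial.C ((-s₂ : ℤ) : ℚ) + (if 0 < s₂ then Polynomial.X else 0) with hq₂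
  have hq₁eval : ∀ r : ℕ, s₁.natAbs < r → q₁.eval (r : ℚ) = (((-s₁) % (r : ℤ) : ℤ) : ℚ) := by
    intro r hr
    rw [SepProof.emod_eval hr, hq₁]
    split_ifs with hs
    · push_cast
      simp [Polynomial.eval_add]
      ring
    · push_cast
      simp [Polynomial.eval_add]
  have hq₂eval : ∀ r : ℕ, s₂.natAbs < r → q₂.eval (r : ℚ) = (((-s₂) % (r : ℤ) : ℤ) : ℚ) := by
    intro r hr
    rw [SepProof.emod_eval hr, hq₂]
    split_ifs with hs
    · push_cast
      simp [Polynomial.eval_add]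
      ring
    · push_cast
      simp [Polynomial.eval_add]
  set P : Polynomial ℚ := p₁ * q₁ ^ c₁ * q₂ ^ c₂ * p₂ with hP
  set N : ℕ := max (max N₁ N₂) (max (s₁.natAbs + 1) (s₂.natAbs + 1)) with hN
  have hbig : ∀ r : ℕ, N ≤ r → G.S 0 A
      (MvPolynomial.X (⟨h₁, hι₁⟩ : G.NonLeg) ^ c₁ *
        MvPolynomial.X (⟨h₂, hι₂⟩ : G.NonLeg) ^ c₂ *
        MvPolynomial.rename ψ₁ (MvPolynomial.monomial d₁ 1) *
        MvPolynomial.rename ψ₂ (MvPolynomial.monomial d₂ 1)) r = P.eval (r : ℚ) := by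
    intro r hr
    have hb₁ : N₁ ≤ r := le_trans (le_trans (le_max_left _ _) (le_max_left _ _)) hr
    have hb₂ : N₂ ≤ r := le_trans (le_trans (le_max_right _ _) (le_max_left _ _)) hr
    have hb₃ : s₁.natAbs < r :=
      lt_of_lt_of_le (Nat.lt_succ_self _)
        (le_trans (le_trans (le_max_left _ _) (le_max_right _ _)) hr)
    have hb₄ : s₂.natAbs < r :=
      lt_of_lt_of_le (Nat.lt_succ_self _)
        (le_trans (le_trans (le_max_right _ _) (le_max_right _ _)) hr)
    have hr0 : 0 < r := lt_of_le_of_lt (Nat.zero_le _) hb₃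
    rw [SepProof.S_eq E A hA c₁ c₂ hι₁ hι₂ ψ₁ hψ₁ ψ₂ hψ₂ d₁ d₂ hr0]
    rw [← hs₁, ← hs₂]
    have e₁ := hN₁ r hb₁
    have e₂ := hN₂ r hb₂
    simp only at e₁ e₂
    rw [e₁, e₂, hP]
    rw [Polynomial.eval_mul, Polynomial.eval_mul, Polynomial.eval_mul,
      Polynomial.eval_pow, Polynomial.eval_pow, hq₁eval r hb₃, hq₂eval r hb₄]
    ring
  have hS0 : G.S0 0 A
      (MvPolynomial.X (⟨h₁, hι₁⟩ : G.NonLeg) ^ c₁ *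
        MvPolynomial.X (⟨h₂, hι₂⟩ : G.NonLeg) ^ c₂ *
        MvPolynomial.rename ψ₁ (MvPolynomial.monomial d₁ 1) *
        MvPolynomial.rename ψ₂ (MvPolynomial.monomial d₂ 1)) = P.eval 0 := by
    rw [LegGraph.S0]
    exact SepProof.constTerm_eq _ P N hbig
  rw [hS0]
  have hS0₁ : G₁.S0 0 (Fin.snoc (fun j : Fin n₁ => A (E.σ.symm (Sum.inl j))) (-s₁))
      (MvPolynomial.monomial d₁ 1) = p₁.eval 0 := by
    rw [LegGraph.S0, constTerm, dif_pos hev₁]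
  have hS0₂ : G₂.S0 0 (Fin.snoc (fun j : Fin n₂ => A (E.σ.symm (Sum.inr j))) (-s₂))
      (MvPolynomial.monomial d₂ 1) = p₂.eval 0 := by
    rw [LegGraph.S0, constTerm, dif_pos hev₂]
  rw [hS0₁, hS0₂, hP]
  have hq₁0 : q₁.eval 0 = ((-s₁ : ℤ) : ℚ) := by
    rw [hq₁]
    split_ifs <;> simp
  have hq₂0 : q₂.eval 0 = ((-s₂ : ℤ) : ℚ) := by
    rw [hq₂]
    split_ifs <;> simp
  rw [Polynomial.eval_mul, Polynomial.eval_mul, Polynomial.eval_mul,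
    Polynomial.eval_pow, Polynomial.eval_pow, hq₁0, hq₂0]
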